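/- For every p ∈ (1,∞) there exists a positive constant C₁ depending only on p such that for every dimension d ∈ ℕ, all vectors y, z ∈ ℝ^d and every real a ≥ 0, one has |(a² + |y|²)^{(p−2)/2} y − (a² + |z|²)^{(p−2)/2} z| ≤ C₁ (a + |y| + |z|)^{p−2} |y − z|. -/

import Mathlib

/-- For `0 ≤ β ≤ 1` and `0 ≤ t ≤ s`, `s^β - t^β ≤ s^(β-1) * (s - t)`. -/
lemma L1 {β s t : ℝ} (hβ0 : 0 ≤ β) (hβ1 : β ≤ 1) (ht : 0 ≤ t) (hts : t ≤ s) :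
    s ^ β - t ^ β ≤ s ^ (β - 1) * (s - t) := by
  have hs : 0 ≤ s := ht.trans hts
  rcases eq_or_lt_of_le hβ0 with hβ | hβ
  · rw [← hβ]
    simp only [Real.rpow_zero, sub_self, zero_sub]
    exact le_trans (by norm_num) (mul_nonneg (Real.rpow_nonneg hs _) (by linarith))
  have hpow : ∀ x : ℝ, 0 < x → x ^ (β - 1) * x = x ^ β := by
    intro x hx
    have := Real.rpow_add hx (β - 1) 1
    rw [show β - 1 + 1 = β by ring, Real.rpow_one] at this
    exact this.symm
  rcases eq_or_lt_of_le ht with ht0 | ht0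
  · rcases eq_or_lt_of_le hs with hs0 | hs0
    · rw [← hs0, ← ht0]; simp
    · rw [← ht0, Real.zero_rpow hβ.ne', sub_zero, sub_zero, hpow s hs0]
  · have hs0 : 0 < s := lt_of_lt_of_le ht0 hts
    have key : s ^ (β - 1) ≤ t ^ (β - 1) :=
      Real.rpow_le_rpow_of_nonpos ht0 hts (by linarith)
    have h1 := hpow s hs0
    have h2 := hpow t ht0
    have h3 : s ^ (β - 1) * t ≤ t ^ (β - 1) * t :=
      mul_le_mul_of_nonneg_right key ht
    nlinarith

/-- For `-1 ≤ α ≤ 0` and `0 < t ≤ s`, `t^α - s^α ≤ t^(α-1) * (s - t)`. -/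
lemma L2 {α s t : ℝ} (hα0 : -1 ≤ α) (hα1 : α ≤ 0) (ht : 0 < t) (hts : t ≤ s) :
    t ^ α - s ^ α ≤ t ^ (α - 1) * (s - t) := by
  have hs : 0 < s := lt_of_lt_of_le ht hts
  have key := L1 (β := -α) (s := s) (t := t) (by linarith) (by linarith) ht.le hts
  have hmul : 0 ≤ t ^ α * s ^ α := mul_nonneg (Real.rpow_nonneg ht.le _) (Real.rpow_nonneg hs.le _)
  have key2 : (s ^ (-α) - t ^ (-α)) * (t ^ α * s ^ α)
      ≤ s ^ (-α - 1) * (s - t) * (t ^ α * s ^ α) := mul_le_mul_of_nonneg_right key hmul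
  have e1 : (s ^ (-α) - t ^ (-α)) * (t ^ α * s ^ α) = t ^ α - s ^ α := by
    have hs1 : s ^ (-α) * s ^ α = 1 := by
      rw [← Real.rpow_add hs]; simp
    have ht1 : t ^ (-α) * t ^ α = 1 := by
      rw [← Real.rpow_add ht]; simp
    linear_combination (t ^ α) * hs1 - (s ^ α) * ht1
  have e2 : s ^ (-α - 1) * (s - t) * (t ^ α * s ^ α) = s ^ (-1 : ℝ) * (s - t) * t ^ α := by
    rw [show (-1 : ℝ) = (-α - 1) + α by ring, Real.rpow_add hs]
    ring
  have e3 : s ^ (-1 : ℝ) ≤ t ^ (-1 : ℝ) := Real.rpow_le_rpow_of_nonpos ht hts (by norm_num)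
  have e4 : s ^ (-1 : ℝ) * (s - t) * t ^ α ≤ t ^ (-1 : ℝ) * (s - t) * t ^ α := by
    have h5 : 0 ≤ (s - t) * t ^ α := mul_nonneg (by linarith) (Real.rpow_nonneg ht.le _)
    nlinarith
  have e5 : t ^ (-1 : ℝ) * (s - t) * t ^ α = t ^ (α - 1) * (s - t) := by
    rw [show α - 1 = -1 + α by ring, Real.rpow_add ht]
    ring
  linarith [key2, e1 ▸ key2]

/-- For `1 ≤ β` and `0 ≤ t ≤ s`, `s^β - t^β ≤ β * s^(β-1) * (s - t)` (Bernoulli). -/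
lemma L3 {β s t : ℝ} (hβ : 1 ≤ β) (ht : 0 ≤ t) (hts : t ≤ s) :
    s ^ β - t ^ β ≤ β * s ^ (β - 1) * (s - t) := by
  have hs : 0 ≤ s := ht.trans hts
  rcases eq_or_lt_of_le hs with hs0 | hs0
  · have ht0 : t = 0 := le_antisymm (hs0 ▸ hts) ht
    rw [← hs0, ht0]
    simp [Real.zero_rpow (by linarith : β ≠ (0:ℝ))]
  · have hx : -1 ≤ t / s - 1 := by
      have : 0 ≤ t / s := div_nonneg ht hs0.le
      linarith
    have bern := one_add_mul_self_le_rpow_one_add hx hβ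
    rw [show 1 + (t / s - 1) = t / s by ring] at bern
    have hdiv : (t / s) ^ β = t ^ β / s ^ β := Real.div_rpow ht hs0.le β
    rw [hdiv] at bern
    have hsβ : 0 < s ^ β := Real.rpow_pos_of_pos hs0 β
    have key : (1 + β * (t / s - 1)) * s ^ β ≤ t ^ β := by
      calc (1 + β * (t / s - 1)) * s ^ β ≤ (t ^ β / s ^ β) * s ^ β :=
            mul_le_mul_of_nonneg_right bern hsβ.le
        _ = t ^ β := by field_simp
    have e1 : (1 + β * (t / s - 1)) * s ^ β = s ^ β + β * s ^ β * (t / s) - β * s ^ β := by ring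
    have e2 : s ^ β * (t / s) = s ^ (β - 1) * t := by
      have h := Real.rpow_add hs0 (β - 1) 1
      rw [show β - 1 + 1 = β by ring, Real.rpow_one] at h
      rw [h]; field_simp
    have e3 : s ^ β = s ^ (β - 1) * s := by
      have h := Real.rpow_add hs0 (β - 1) 1
      rw [show β - 1 + 1 = β by ring, Real.rpow_one] at h
      exact h
    nlinarith [key]

/-- Comparison of negative powers: if `Msq ≤ K * x` with `x, Msq > 0`, `1 ≤ K`,
and `-1 ≤ r ≤ 0`, then `x ^ r ≤ K * Msq ^ r`. -/
lemma L4 {x K r Msq : ℝ} (hx : 0 < x) (hK : 1 ≤ K) (hMx : Msq ≤ K * x)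
    (hr1 : -1 ≤ r) (hr0 : r ≤ 0) (hMsq : 0 < Msq) : x ^ r ≤ K * Msq ^ r := by
  have hK0 : 0 < K := lt_of_lt_of_le one_pos hK
  have hdiv : Msq / K ≤ x := (div_le_iff₀' hK0).2 hMx
  have hdiv0 : 0 < Msq / K := div_pos hMsq hK0
  have h1 : x ^ r ≤ (Msq / K) ^ r := Real.rpow_le_rpow_of_nonpos hdiv0 hdiv hr0
  have h2 : (Msq / K) ^ r = Msq ^ r / K ^ r := Real.div_rpow hMsq.le hK0.le r
  have h3 : K ^ (-r) ≤ K ^ (1 : ℝ) := Real.rpow_le_rpow_of_exponent_le hK (by linarith)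
  have h4 : Msq ^ r / K ^ r = Msq ^ r * K ^ (-r) := by
    rw [Real.rpow_neg hK0.le, div_eq_mul_inv]
  have h3' : K ^ (-r) ≤ K := by
    calc K ^ (-r) ≤ K ^ (1 : ℝ) := h3
      _ = K := Real.rpow_one K
  have h5 : Msq ^ r * K ^ (-r) ≤ Msq ^ r * K :=
    mul_le_mul_of_nonneg_left h3' (Real.rpow_nonneg hMsq.le _)
  calc x ^ r ≤ (Msq / K) ^ r := h1
    _ = Msq ^ r * K ^ (-r) := by rw [h2, h4]
    _ ≤ Msq ^ r * K := h5
    _ = K * Msq ^ r := mul_comm _ _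

set_option maxHeartbeats 1600000 in
lemma aux_main (p : ℝ) (hp : 1 < p) {d : ℕ} (y z : EuclideanSpace ℝ (Fin d)) (a : ℝ)
    (ha : 0 ≤ a) (hzy : ‖z‖ ≤ ‖y‖) :
    ‖((a ^ 2 + ‖y‖ ^ 2) ^ ((p - 2) / 2)) • y - ((a ^ 2 + ‖z‖ ^ 2) ^ ((p - 2) / 2)) • z‖ ≤
      (40 + 4 * p) * (a + ‖y‖ + ‖z‖) ^ (p - 2) * ‖y - z‖ := by
  have hyn : (0:ℝ) ≤ ‖y‖ := norm_nonneg y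
  have hzn : (0:ℝ) ≤ ‖z‖ := norm_nonneg z
  by_cases hy0 : a + ‖y‖ = 0
  · have ha0 : a = 0 := by nlinarith
    have hy : ‖y‖ = 0 := by nlinarith
    have hz : ‖z‖ = 0 := le_antisymm (hy ▸ hzy) hzn
    rw [norm_eq_zero] at hy hz
    rw [hy, hz]
    simp
  · have hu : 0 < a + ‖y‖ := lt_of_le_of_ne (by positivity) (Ne.symm hy0)
    set s : ℝ := a ^ 2 + ‖y‖ ^ 2 with hs_def
    set t : ℝ := a ^ 2 + ‖z‖ ^ 2 with ht_def
    set M : ℝ := a + ‖y‖ + ‖z‖ with hM_def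
    set e : ℝ := ‖y - z‖ with he_def
    have hen : 0 ≤ e := norm_nonneg _
    have hs0 : 0 < s := by nlinarith [sq_nonneg (a - ‖y‖)]
    have ht0 : 0 ≤ t := by positivity
    have hts : t ≤ s := by nlinarith
    have hM : 0 < M := by rw [hM_def]; linarith
    have hMu : M ≤ 2 * (a + ‖y‖) := by rw [hM_def]; linarith
    have hsM2 : s ≤ M ^ 2 := by rw [hs_def, hM_def]; nlinarith
    have hM2s : M ^ 2 ≤ 8 * s := by rw [hs_def, hM_def]; nlinarith [sq_nonneg (a - ‖y‖), sq_nonneg (‖y‖ - ‖z‖)]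
    have hyz : ‖y‖ - ‖z‖ ≤ e := by
      rw [he_def]; exact (abs_le.1 (abs_norm_sub_norm_le y z)).2
    have hst_sub : s - t ≤ M * e := by
      rw [hs_def, ht_def, hM_def]; nlinarith
    have hzsqt : ‖z‖ ^ 2 ≤ t := by rw [ht_def]; nlinarith
    have hM2 : (0:ℝ) < M ^ 2 := by positivity
    have hMP : (0:ℝ) ≤ M ^ (p - 2) := Real.rpow_nonneg hM.le _
    have hzM : ‖z‖ ≤ M := by rw [hM_def]; linarith
    have hMconv : ((M ^ 2 : ℝ)) ^ ((p - 2) / 2) = M ^ (p - 2) := by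
      rw [← Real.rpow_natCast M 2, ← Real.rpow_mul hM.le]
      norm_num
      congr 1
      ring
    -- Step A : the coefficient bound
    have hA : s ^ ((p - 2) / 2) ≤ 8 * M ^ (p - 2) := by
      rcases le_or_gt 2 p with h2p | h2p
      · have h1 : s ^ ((p - 2) / 2) ≤ (M ^ 2) ^ ((p - 2) / 2) :=
          Real.rpow_le_rpow hs0.le hsM2 (by linarith)
        rw [hMconv] at h1
        linarith
      · have h1 : s ^ ((p - 2) / 2) ≤ 8 * (M ^ 2) ^ ((p - 2) / 2) :=
          L4 hs0 (by norm_num) (by linarith) (by linarith) (by linarith) hM2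
        rw [hMconv] at h1
        linarith
    -- Step B : the difference bound
    have hB : |s ^ ((p - 2) / 2) - t ^ ((p - 2) / 2)| * ‖z‖ ≤
        (32 + 4 * p) * (M ^ (p - 2) * e) := by
      have hRHS0 : (0:ℝ) ≤ (32 + 4 * p) * (M ^ (p - 2) * e) := by
        apply mul_nonneg (by linarith) (mul_nonneg hMP hen)
      rcases le_or_gt 2 p with h2p | h2p
      · -- p ≥ 2
        have hβ0 : (0:ℝ) ≤ (p - 2) / 2 := by linarith
        have hmono : t ^ ((p - 2) / 2) ≤ s ^ ((p - 2) / 2) :=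
          Real.rpow_le_rpow ht0 hts hβ0
        have habs : |s ^ ((p - 2) / 2) - t ^ ((p - 2) / 2)| =
            s ^ ((p - 2) / 2) - t ^ ((p - 2) / 2) := abs_of_nonneg (by linarith)
        rw [habs]
        have hconv2 : ((M ^ 2 : ℝ)) ^ ((p - 2) / 2 - 1) * M ^ 2 = M ^ (p - 2) := by
          have h := Real.rpow_add hM2 ((p - 2) / 2 - 1) 1
          rw [show (p - 2) / 2 - 1 + 1 = (p - 2) / 2 by ring, Real.rpow_one] at h
          rw [← hMconv, h]
        rcases le_or_gt ((p - 2) / 2) 1 with hβ1 | hβ1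
        · -- 2 ≤ p ≤ 4
          have key := L1 hβ0 hβ1 ht0 hts
          have h4 : s ^ ((p - 2) / 2 - 1) ≤ 8 * (M ^ 2) ^ ((p - 2) / 2 - 1) :=
            L4 hs0 (by norm_num) (by linarith) (by linarith) (by linarith) hM2
          have hsp0 : (0:ℝ) ≤ s ^ ((p - 2) / 2 - 1) := Real.rpow_nonneg hs0.le _
          calc (s ^ ((p - 2) / 2) - t ^ ((p - 2) / 2)) * ‖z‖
              ≤ (s ^ ((p - 2) / 2 - 1) * (s - t)) * ‖z‖ :=
                mul_le_mul_of_nonneg_right key hzn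
            _ ≤ (s ^ ((p - 2) / 2 - 1) * (M * e)) * M := by
                apply mul_le_mul (mul_le_mul_of_nonneg_left hst_sub hsp0) hzM hzn
                positivity
            _ = s ^ ((p - 2) / 2 - 1) * (M ^ 2 * e) := by ring
            _ ≤ (8 * (M ^ 2) ^ ((p - 2) / 2 - 1)) * (M ^ 2 * e) := by
                apply mul_le_mul_of_nonneg_right h4 (by positivity)
            _ = 8 * ((M ^ 2) ^ ((p - 2) / 2 - 1) * M ^ 2) * e := by ring
            _ = 8 * M ^ (p - 2) * e := by rw [hconv2]
            _ = 8 * (M ^ (p - 2) * e) := by ring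
            _ ≤ (32 + 4 * p) * (M ^ (p - 2) * e) :=
                mul_le_mul_of_nonneg_right (by linarith) (mul_nonneg hMP hen)
        · -- p > 4
          have key := L3 (le_of_lt hβ1) ht0 hts
          have h4 : s ^ ((p - 2) / 2 - 1) ≤ (M ^ 2) ^ ((p - 2) / 2 - 1) :=
            Real.rpow_le_rpow hs0.le hsM2 (by linarith)
          have hsp0 : (0:ℝ) ≤ s ^ ((p - 2) / 2 - 1) := Real.rpow_nonneg hs0.le _
          have hβpos : (0:ℝ) < (p - 2) / 2 := by linarith
          calc (s ^ ((p - 2) / 2) - t ^ ((p - 2) / 2)) * ‖z‖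
              ≤ ((p - 2) / 2 * s ^ ((p - 2) / 2 - 1) * (s - t)) * ‖z‖ :=
                mul_le_mul_of_nonneg_right key hzn
            _ ≤ ((p - 2) / 2 * s ^ ((p - 2) / 2 - 1) * (M * e)) * M := by
                apply mul_le_mul _ hzM hzn (by positivity)
                apply mul_le_mul_of_nonneg_left hst_sub (by positivity)
            _ = (p - 2) / 2 * (s ^ ((p - 2) / 2 - 1) * (M ^ 2 * e)) := by ring
            _ ≤ (p - 2) / 2 * ((M ^ 2) ^ ((p - 2) / 2 - 1) * (M ^ 2 * e)) := by
                apply mul_le_mul_of_nonneg_left _ (by linarith)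
                apply mul_le_mul_of_nonneg_right h4 (by positivity)
            _ = (p - 2) / 2 * (((M ^ 2) ^ ((p - 2) / 2 - 1) * M ^ 2) * e) := by ring
            _ = (p - 2) / 2 * (M ^ (p - 2) * e) := by rw [hconv2]
            _ ≤ (32 + 4 * p) * (M ^ (p - 2) * e) := by
                apply mul_le_mul_of_nonneg_right (by linarith) (mul_nonneg hMP hen)
      · -- 1 < p < 2
        by_cases hz0 : ‖z‖ = 0
        · rw [hz0, mul_zero]; exact hRHS0
        · have hz0' : 0 < ‖z‖ := lt_of_le_of_ne hzn (Ne.symm hz0)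
          have ht0' : 0 < t := by rw [ht_def]; nlinarith
          have hα0 : (p - 2) / 2 ≤ 0 := by linarith
          have hα1 : (-1:ℝ) ≤ (p - 2) / 2 := by linarith
          have hmono : s ^ ((p - 2) / 2) ≤ t ^ ((p - 2) / 2) :=
            Real.rpow_le_rpow_of_nonpos ht0' hts hα0
          have habs : |s ^ ((p - 2) / 2) - t ^ ((p - 2) / 2)| =
              t ^ ((p - 2) / 2) - s ^ ((p - 2) / 2) := by
            rw [abs_sub_comm]; exact abs_of_nonneg (by linarith)
          rw [habs]
          have hzt : ‖z‖ ≤ t ^ ((1:ℝ)/2) := by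
            rw [← Real.sqrt_eq_rpow]
            exact (Real.le_sqrt hzn ht0).2 hzsqt
          rcases le_or_gt (2 * e) (a + ‖y‖) with h2e | h2e
          · -- segment away from the origin
            have hMt : M ^ 2 ≤ 32 * t := by
              have h1 : M ≤ 4 * (a + ‖z‖) := by
                rw [hM_def]; linarith
              have h2 : M ^ 2 ≤ 16 * (a + ‖z‖) ^ 2 := by nlinarith [hM.le]
              rw [ht_def]; nlinarith [sq_nonneg (a - ‖z‖)]
            have key := L2 hα1 hα0 ht0' hts
            have h4 : t ^ ((p - 2) / 2 - 1 / 2) ≤ 32 * (M ^ 2) ^ ((p - 2) / 2 - 1 / 2) :=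
              L4 ht0' (by norm_num) (by linarith) (by linarith) (by linarith) hM2
            have htp0 : (0:ℝ) ≤ t ^ ((p - 2) / 2 - 1) := Real.rpow_nonneg ht0'.le _
            have hcomb : t ^ ((p - 2) / 2 - 1) * t ^ ((1:ℝ)/2) = t ^ ((p - 2) / 2 - 1 / 2) := by
              rw [← Real.rpow_add ht0']
              congr 1
              ring
            have hconv3 : ((M ^ 2 : ℝ)) ^ ((p - 2) / 2 - 1 / 2) * M = M ^ (p - 2) := by
              have h1 : ((M ^ 2 : ℝ)) ^ ((p - 2) / 2 - 1 / 2) = M ^ (p - 3) := by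
                rw [← Real.rpow_natCast M 2, ← Real.rpow_mul hM.le]
                norm_num
                congr 1
                ring
              have h := Real.rpow_add hM (p - 3) 1
              rw [show p - 3 + 1 = p - 2 by ring, Real.rpow_one] at h
              rw [h1, ← h]
            calc (t ^ ((p - 2) / 2) - s ^ ((p - 2) / 2)) * ‖z‖
                ≤ (t ^ ((p - 2) / 2 - 1) * (s - t)) * ‖z‖ :=
                  mul_le_mul_of_nonneg_right key hzn
              _ ≤ (t ^ ((p - 2) / 2 - 1) * (M * e)) * t ^ ((1:ℝ)/2) := by
                  apply mul_le_mul (mul_le_mul_of_nonneg_left hst_sub htp0) hzt hzn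
                  positivity
              _ = (t ^ ((p - 2) / 2 - 1) * t ^ ((1:ℝ)/2)) * (M * e) := by ring
              _ = t ^ ((p - 2) / 2 - 1 / 2) * (M * e) := by rw [hcomb]
              _ ≤ (32 * (M ^ 2) ^ ((p - 2) / 2 - 1 / 2)) * (M * e) := by
                  apply mul_le_mul_of_nonneg_right h4 (by positivity)
              _ = 32 * (((M ^ 2) ^ ((p - 2) / 2 - 1 / 2)) * M) * e := by ring
              _ = 32 * M ^ (p - 2) * e := by rw [hconv3]
              _ = 32 * (M ^ (p - 2) * e) := by ring
              _ ≤ (32 + 4 * p) * (M ^ (p - 2) * e) :=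
                  mul_le_mul_of_nonneg_right (by linarith) (mul_nonneg hMP hen)
          · -- crude bound
            have hb1 : t ^ ((p - 2) / 2) - s ^ ((p - 2) / 2) ≤ t ^ ((p - 2) / 2) := by
              have := Real.rpow_nonneg hs0.le ((p - 2) / 2)
              linarith
            have hb2 : t ^ ((p - 2) / 2) * ‖z‖ ≤ t ^ ((p - 2) / 2) * t ^ ((1:ℝ)/2) :=
              mul_le_mul_of_nonneg_left hzt (Real.rpow_nonneg ht0'.le _)
            have hb3 : t ^ ((p - 2) / 2) * t ^ ((1:ℝ)/2) = t ^ ((p - 1) / 2) := by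
              rw [← Real.rpow_add ht0']
              norm_num
              ring_nf
            have htz2 : t ≤ (a + ‖z‖) ^ 2 := by rw [ht_def]; nlinarith
            have hb4 : t ^ ((p - 1) / 2) ≤ ((a + ‖z‖) ^ 2) ^ ((p - 1) / 2) :=
              Real.rpow_le_rpow ht0'.le htz2 (by linarith)
            have hb5 : (((a + ‖z‖) ^ 2 : ℝ)) ^ ((p - 1) / 2) = (a + ‖z‖) ^ (p - 1) := by
              rw [← Real.rpow_natCast (a + ‖z‖) 2, ← Real.rpow_mul (by positivity)]
              norm_num
              congr 1
              ring
            have hb6 : (a + ‖z‖) ^ (p - 1) ≤ (a + ‖y‖) ^ (p - 1) :=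
              Real.rpow_le_rpow (by positivity) (by linarith) (by linarith)
            have hb7 : (a + ‖y‖) ^ (p - 1) = (a + ‖y‖) ^ (p - 2) * (a + ‖y‖) := by
              have h := Real.rpow_add hu (p - 2) 1
              rw [show p - 2 + 1 = p - 1 by ring, Real.rpow_one] at h
              exact h
            have hb8 : (a + ‖y‖) ^ (p - 2) ≤ 2 * M ^ (p - 2) :=
              L4 hu (by norm_num) (by linarith) (by linarith) (by linarith) hM
            have hb9 : (a + ‖y‖) ^ (p - 2) * (a + ‖y‖) ≤ (2 * M ^ (p - 2)) * (2 * e) := by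
              apply mul_le_mul hb8 (by linarith) hu.le (by positivity)
            calc (t ^ ((p - 2) / 2) - s ^ ((p - 2) / 2)) * ‖z‖
                ≤ t ^ ((p - 2) / 2) * ‖z‖ := mul_le_mul_of_nonneg_right hb1 hzn
              _ ≤ t ^ ((p - 1) / 2) := by rw [← hb3]; exact hb2
              _ ≤ (a + ‖z‖) ^ (p - 1) := by rw [← hb5]; exact hb4
              _ ≤ (a + ‖y‖) ^ (p - 1) := hb6
              _ = (a + ‖y‖) ^ (p - 2) * (a + ‖y‖) := hb7
              _ ≤ (2 * M ^ (p - 2)) * (2 * e) := hb9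
              _ = 4 * (M ^ (p - 2) * e) := by ring
              _ ≤ (32 + 4 * p) * (M ^ (p - 2) * e) := by
                  apply mul_le_mul_of_nonneg_right (by linarith) (mul_nonneg hMP hen)
    -- assemble
    have decomp : (s ^ ((p - 2) / 2)) • y - (t ^ ((p - 2) / 2)) • z =
        (s ^ ((p - 2) / 2)) • (y - z) +
          (s ^ ((p - 2) / 2) - t ^ ((p - 2) / 2)) • z := by
      rw [smul_sub, sub_smul]; abel
    calc ‖(s ^ ((p - 2) / 2)) • y - (t ^ ((p - 2) / 2)) • z‖
        = ‖(s ^ ((p - 2) / 2)) • (y - z) +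
            (s ^ ((p - 2) / 2) - t ^ ((p - 2) / 2)) • z‖ := by rw [decomp]
      _ ≤ ‖(s ^ ((p - 2) / 2)) • (y - z)‖ +
            ‖(s ^ ((p - 2) / 2) - t ^ ((p - 2) / 2)) • z‖ := norm_add_le _ _
      _ = s ^ ((p - 2) / 2) * e +
            |s ^ ((p - 2) / 2) - t ^ ((p - 2) / 2)| * ‖z‖ := by
          rw [norm_smul, norm_smul, Real.norm_eq_abs, Real.norm_eq_abs,
            abs_of_nonneg (Real.rpow_nonneg hs0.le _)]
      _ ≤ 8 * M ^ (p - 2) * e + (32 + 4 * p) * (M ^ (p - 2) * e) :=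
          add_le_add (mul_le_mul_of_nonneg_right hA hen) hB
      _ = (40 + 4 * p) * M ^ (p - 2) * e := by ring

theorem stmt_0 :
    ∀ p : ℝ, 1 < p →
      ∃ C₁ : ℝ, 0 < C₁ ∧
        ∀ (d : ℕ) (y z : EuclideanSpace ℝ (Fin d)) (a : ℝ), 0 ≤ a →
          ‖((a ^ 2 + ‖y‖ ^ 2) ^ ((p - 2) / 2)) • y -
              ((a ^ 2 + ‖z‖ ^ 2) ^ ((p - 2) / 2)) • z‖ ≤
            C₁ * (a + ‖y‖ + ‖z‖) ^ (p - 2) * ‖y - z‖ := by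
  intro p hp
  refine ⟨40 + 4 * p, by linarith, fun d y z a ha => ?_⟩
  rcases le_total ‖z‖ ‖y‖ with h | h
  · exact aux_main p hp y z a ha h
  · have h2 := aux_main p hp z y a ha h
    rw [norm_sub_rev, norm_sub_rev z y, show a + ‖z‖ + ‖y‖ = a + ‖y‖ + ‖z‖ by ring] at h2
    exact h2
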